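/- Suppose f is irreducible in ℤ[u^{±1}] and noncyclotomic. Then V_f = {v ∈ ℓ^∞(ℤ,ℤ) : ξ̄*(v) is a bounded sequence}, and ξ̄*(V_f) ⊆ W_f. -/

import Mathlib

open Filter Topology Polynomial

noncomputable section

/-- `f(σ̄)` on real sequences. -/
def fsR (f : Polynomial ℤ) (w : ℤ → ℝ) : ℤ → ℝ :=
  fun n => ∑ k ∈ Finset.range (f.natDegree + 1), (f.coeff k : ℝ) * w (n + (k : ℤ))

/-- Bounded real sequences. -/
def Bdd (w : ℤ → ℝ) : Prop := ∃ B : ℝ, ∀ n, |w n| ≤ B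

/-- Bounded integer sequences. -/
def BddZ (v : ℤ → ℤ) : Prop := ∃ B : ℤ, ∀ n, |v n| ≤ B

/-- The sequence `v^Δ`. -/
def vDelta : ℤ → ℝ := fun n => if n = 0 then 1 else 0

/-- `f` is noncyclotomic. -/
def Noncyclotomic (f : Polynomial ℤ) : Prop :=
  ∀ θ : ℂ, Polynomial.aeval θ f = 0 → ∀ n : ℕ, 0 < n → θ ^ n ≠ 1

/-- `w⁺`. -/
def IsWplus (f : Polynomial ℤ) (w : ℤ → ℝ) : Prop :=
  Bdd w ∧ fsR f w = vDelta ∧ Tendsto w atTop (nhds 0)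

/-- `w⁻`. -/
def IsWminus (f : Polynomial ℤ) (w : ℤ → ℝ) : Prop :=
  Bdd w ∧ fsR f w = vDelta ∧ Tendsto w atBot (nhds 0)

/-- `ξ̄*(v)_k = ∑_{n≥0} v_n w⁻_{k-n} + ∑_{n<0} v_n w⁺_{k-n}`. -/
def xiStar (wp wm : ℤ → ℝ) (v : ℤ → ℤ) : ℤ → ℝ :=
  fun k => ∑' n : ℤ, (v n : ℝ) * (if 0 ≤ n then wm (k - n) else wp (k - n))

/-- Membership in `W_f = f(σ̄)^{-1}(ℓ^∞(ℤ,ℤ)) ⊆ ℓ^∞(ℤ,ℝ)`. -/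
def InWf (f : Polynomial ℤ) (w : ℤ → ℝ) : Prop :=
  Bdd w ∧ ∀ n, ∃ z : ℤ, fsR f w n = (z : ℝ)

/-- Membership in `V_f = f(σ̄)(W_f)` for an integer sequence. -/
def InVf (f : Polynomial ℤ) (v : ℤ → ℤ) : Prop :=
  ∃ w : ℤ → ℝ, Bdd w ∧ ∀ n, fsR f w n = (v n : ℝ)

namespace XiAux

/-- Shift operator on complex sequences. -/
def S : Module.End ℂ (ℕ → ℂ) where
  toFun x := fun n => x (n + 1)
  map_add' _ _ := rfl
  map_smul' _ _ := rfl

lemma S_pow_apply (i : ℕ) (x : ℕ → ℂ) (n : ℕ) : (S ^ i) x n = x (n + i) := by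
  induction i generalizing x n with
  | zero => simp
  | succ i ih =>
    rw [pow_succ]
    have : (S ^ i * S) x = (S ^ i) (S x) := rfl
    rw [this, ih]
    show x (n + i + 1) = x (n + (i + 1))
    ring_nf

/-- The complex absolute value. -/
def Complex.abs : AbsoluteValue ℂ ℝ := NormedField.toAbsoluteValue ℂ

lemma Complex.abs_ofReal (r : ℝ) : Complex.abs (r : ℂ) = |r| := by
  show ‖(r : ℂ)‖ = |r|
  simp

lemma Complex.continuous_abs : Continuous Complex.abs := by
  show Continuous (fun z : ℂ => ‖z‖)
  exact continuous_norm

/-- Exponential decay of a complex sequence. -/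
def ExpDecay (x : ℕ → ℂ) : Prop :=
  ∃ C r : ℝ, 0 ≤ C ∧ 0 < r ∧ r < 1 ∧ ∀ n, Complex.abs (x n) ≤ C * r ^ n

lemma expDecay_zero : ExpDecay (fun _ => 0) :=
  ⟨0, 1/2, le_refl _, by norm_num, by norm_num, fun n => by simp⟩

lemma aeval_S_apply (p : Polynomial ℂ) {N : ℕ} (hN : p.natDegree < N) (x : ℕ → ℂ) (n : ℕ) :
    (Polynomial.aeval S p) x n = ∑ j ∈ Finset.range N, p.coeff j * x (n + j) := by
  rw [Polynomial.aeval_eq_sum_range' hN]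
  rw [LinearMap.sum_apply]
  rw [Finset.sum_apply]
  refine Finset.sum_congr rfl fun j _ => ?_
  rw [LinearMap.smul_apply]
  show p.coeff j * ((S ^ j) x n) = _
  rw [S_pow_apply]

lemma aeval_S_tendsto (p : Polynomial ℂ) (x : ℕ → ℂ) (hx : Tendsto x atTop (nhds 0)) :
    Tendsto (fun n => (Polynomial.aeval S p) x n) atTop (nhds 0) := by
  have h : ∀ n, (Polynomial.aeval S p) x n
      = ∑ j ∈ Finset.range (p.natDegree + 1), p.coeff j * x (n + j) :=
    aeval_S_apply p (Nat.lt_succ_self _) x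
  rw [show (0 : ℂ) = ∑ j ∈ Finset.range (p.natDegree + 1), (0 : ℂ) by simp]
  apply Tendsto.congr (fun n => (h n).symm)
  apply tendsto_finset_sum
  intro j _
  have hxj : Tendsto (fun n => x (n + j)) atTop (nhds 0) := hx.comp (tendsto_add_atTop_nat j)
  simpa using hxj.const_mul (p.coeff j)

lemma step (μ : ℂ) (y z : ℕ → ℂ) (hy : Tendsto y atTop (nhds 0))
    (hrel : ∀ n, y (n + 1) = μ * y n + z n) (hz : ExpDecay z) : ExpDecay y := by
  obtain ⟨C, r, hC, hr0, hr1, hb⟩ := hz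
  by_cases hμ : Complex.abs μ < 1
  · -- contracting case
    set s : ℝ := max r ((Complex.abs μ + 1) / 2) with hs
    have hs1 : s < 1 := max_lt hr1 (by linarith)
    have hμs : Complex.abs μ < s := lt_of_lt_of_le (by linarith) (le_max_right _ _)
    have hs0 : 0 < s := lt_of_lt_of_le hr0 (le_max_left _ _)
    have hrs : r ≤ s := le_max_left _ _
    set A : ℝ := Complex.abs (y 0) + C / (s - Complex.abs μ) with hA
    have hden : 0 < s - Complex.abs μ := by linarith
    have hA0 : 0 ≤ A := add_nonneg (AbsoluteValue.nonneg _ _) (div_nonneg hC hden.le)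
    refine ⟨A, s, hA0, hs0, hs1, fun n => ?_⟩
    induction n with
    | zero =>
      simp only [pow_zero, mul_one, hA]
      have : 0 ≤ C / (s - Complex.abs μ) := div_nonneg hC hden.le
      linarith
    | succ n ih =>
      have h1 : Complex.abs (y (n + 1)) ≤ Complex.abs μ * Complex.abs (y n)
          + Complex.abs (z n) := by
        rw [hrel n]
        calc Complex.abs (μ * y n + z n) ≤ Complex.abs (μ * y n) + Complex.abs (z n) :=
              AbsoluteValue.add_le _ _ _
        _ = Complex.abs μ * Complex.abs (y n) + Complex.abs (z n) := by rw [map_mul]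
      have h2 : Complex.abs (z n) ≤ C * s ^ n :=
        (hb n).trans (mul_le_mul_of_nonneg_left (pow_le_pow_left₀ hr0.le hrs n) hC)
      have h3 : Complex.abs μ * Complex.abs (y n) ≤ Complex.abs μ * (A * s ^ n) :=
        mul_le_mul_of_nonneg_left ih (AbsoluteValue.nonneg _ _)
      have e1 : A * s - A * Complex.abs μ = Complex.abs (y 0) * (s - Complex.abs μ) + C := by
        rw [hA]; field_simp
      have hkey : Complex.abs μ * A + C ≤ A * s := by
        have h4 : 0 ≤ Complex.abs (y 0) * (s - Complex.abs μ) :=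
          mul_nonneg (AbsoluteValue.nonneg _ _) hden.le
        linarith
      have hsn : (0:ℝ) ≤ s ^ n := pow_nonneg hs0.le n
      calc Complex.abs (y (n+1)) ≤ Complex.abs μ * (A * s ^ n) + C * s ^ n := by linarith
      _ = (Complex.abs μ * A + C) * s ^ n := by ring
      _ ≤ (A * s) * s ^ n := mul_le_mul_of_nonneg_right hkey hsn
      _ = A * s ^ (n + 1) := by ring
  · -- expanding case
    push_neg at hμ
    have h1r : (0:ℝ) < 1 - r := by linarith
    have hμ0 : μ ≠ 0 := by
      intro h; rw [h] at hμ; simp at hμ; linarith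
    have hone : ∀ n, Complex.abs (y n) ≤ Complex.abs (y (n + 1)) + C * r ^ n := by
      intro n
      have hyn : y n = (y (n + 1) - z n) / μ := by
        rw [hrel n]; field_simp; ring
      rw [hyn, map_div₀]
      have h1 : Complex.abs (y (n+1) - z n) ≤ Complex.abs (y (n+1)) + C * r ^ n := by
        calc Complex.abs (y (n+1) - z n) = Complex.abs (y (n+1) + -(z n)) := by
              rw [sub_eq_add_neg]
        _ ≤ Complex.abs (y (n+1)) + Complex.abs (-(z n)) := AbsoluteValue.add_le _ _ _
        _ = Complex.abs (y (n+1)) + Complex.abs (z n) := by rw [AbsoluteValue.map_neg]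
        _ ≤ _ := by linarith [hb n]
      have h2 : Complex.abs (y (n+1) - z n) / Complex.abs μ ≤ Complex.abs (y (n+1) - z n) :=
        div_le_self (AbsoluteValue.nonneg _ _) hμ
      linarith
    have key : ∀ m n, Complex.abs (y n) ≤ Complex.abs (y (n + m)) + C * r ^ n * (1 - r)⁻¹ := by
      intro m
      induction m with
      | zero =>
        intro n
        simp only [Nat.add_zero]
        have : 0 ≤ C * r ^ n * (1-r)⁻¹ :=
          mul_nonneg (mul_nonneg hC (pow_nonneg hr0.le n)) (inv_nonneg.mpr h1r.le)
        linarith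
      | succ m ih =>
        intro n
        have h1 := hone n
        have h2 := ih (n + 1)
        have harr : n + 1 + m = n + (m + 1) := by ring
        rw [harr] at h2
        have h3 : C * r ^ (n+1) * (1-r)⁻¹ + C * r ^ n = C * r ^ n * (1-r)⁻¹ := by
          field_simp
          ring
        calc Complex.abs (y n) ≤ Complex.abs (y (n+1)) + C * r ^ n := h1
        _ ≤ Complex.abs (y (n + (m+1))) + C * r ^ (n+1) * (1-r)⁻¹ + C * r ^ n := by linarith
        _ = Complex.abs (y (n + (m+1))) + C * r ^ n * (1-r)⁻¹ := by rw [add_assoc, h3]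
    have hCr : 0 ≤ C * (1-r)⁻¹ := mul_nonneg hC (inv_nonneg.mpr h1r.le)
    refine ⟨C * (1 - r)⁻¹, r, hCr, hr0, hr1, fun n => ?_⟩
    have hynm : Tendsto (fun m => y (m + n)) atTop (nhds 0) :=
      hy.comp (tendsto_add_atTop_nat n)
    have hynm' : Tendsto (fun m => y (n + m)) atTop (nhds 0) := by
      apply hynm.congr (fun m => by rw [Nat.add_comm])
    have hlim : Tendsto (fun m => Complex.abs (y (n + m)) + C * r ^ n * (1 - r)⁻¹) atTop
        (nhds (0 + C * r ^ n * (1 - r)⁻¹)) := by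
      apply Tendsto.add _ tendsto_const_nhds
      simpa [Function.comp_def] using (Complex.continuous_abs.tendsto 0).comp hynm'
    have hfin := ge_of_tendsto hlim (Eventually.of_forall (fun m => key m n))
    rw [zero_add] at hfin
    calc Complex.abs (y n) ≤ C * r ^ n * (1-r)⁻¹ := hfin
    _ = C * (1-r)⁻¹ * r ^ n := by ring

lemma decay_of_ann : ∀ (k : ℕ) (p : ℂ[X]), p.natDegree = k → p ≠ 0 → ∀ x : ℕ → ℂ,
    Tendsto x atTop (nhds 0) → ExpDecay ((Polynomial.aeval S p) x) → ExpDecay x := by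
  intro k
  induction k with
  | zero =>
    intro p hdeg hp x hx hz
    have hc : p = C (p.coeff 0) := eq_C_of_natDegree_eq_zero hdeg
    have ha : p.coeff 0 ≠ 0 := by
      intro h; apply hp; rw [hc, h, map_zero]
    obtain ⟨C', r, hC, hr0, hr1, hb⟩ := hz
    refine ⟨C' / Complex.abs (p.coeff 0), r, div_nonneg hC (AbsoluteValue.nonneg _ _),
      hr0, hr1, fun n => ?_⟩
    have he : (Polynomial.aeval S p) x n = p.coeff 0 * x n := by
      conv_lhs => rw [hc]
      rw [Polynomial.aeval_C, Module.algebraMap_end_apply]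
      rfl
    have := hb n
    rw [he, map_mul] at this
    have habs : Complex.abs (p.coeff 0) > 0 := AbsoluteValue.pos _ ha
    rw [div_mul_eq_mul_div, le_div_iff₀ habs]
    calc Complex.abs (x n) * Complex.abs (p.coeff 0)
        = Complex.abs (p.coeff 0) * Complex.abs (x n) := by ring
    _ ≤ C' * r ^ n := this
  | succ k ih =>
    intro p hdeg hp x hx hz
    have hdeg' : 0 < p.degree := by
      rw [Polynomial.degree_eq_natDegree hp, hdeg]
      exact_mod_cast Nat.succ_pos k
    obtain ⟨μ, hμ⟩ := Complex.exists_root hdeg'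
    set q := p / (X - C μ) with hqdef
    have hfac : (X - C μ) * q = p := (Polynomial.mul_div_eq_iff_isRoot).mpr hμ
    have hq0 : q ≠ 0 := by
      intro h; apply hp; rw [← hfac, h, mul_zero]
    have hqdeg : q.natDegree = k := by
      have h1 : ((X - C μ) * q).natDegree = (X - C μ).natDegree + q.natDegree :=
        Polynomial.natDegree_mul (Polynomial.X_sub_C_ne_zero μ) hq0
      rw [hfac, hdeg, Polynomial.natDegree_X_sub_C] at h1
      omega
    set y := (Polynomial.aeval S q) x with hydef
    have hy0 : Tendsto y atTop (nhds 0) := aeval_S_tendsto q x hx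
    have hrel : ∀ n, y (n + 1) = μ * y n + ((Polynomial.aeval S p) x) n := by
      intro n
      have h1 : (Polynomial.aeval S p) x = (Polynomial.aeval S (X - C μ)) y := by
        rw [← hfac, map_mul]; rfl
      have h2 : (Polynomial.aeval S (X - C μ)) y n = y (n+1) - μ * y n := by
        rw [map_sub, Polynomial.aeval_X, Polynomial.aeval_C]
        show (S y - (algebraMap ℂ (Module.End ℂ (ℕ → ℂ)) μ) y) n = _
        rw [Module.algebraMap_end_apply]
        show y (n+1) - μ • y n = _
        rw [smul_eq_mul]
      rw [h1, h2]; ring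
    have hyd : ExpDecay y := step μ y _ hy0 hrel hz
    exact ih q hqdeg hq0 x hx hyd

lemma decay_wm (f : Polynomial ℤ) (h0 : f.coeff 0 ≠ 0) (wm : ℤ → ℝ) (hwm : IsWminus f wm) :
    ∃ C r : ℝ, 0 ≤ C ∧ 0 < r ∧ r < 1 ∧
      ∀ n : ℕ, |wm ((f.natDegree : ℤ) - 1 - n)| ≤ C * r ^ n := by
  set d := f.natDegree with hd
  set x : ℕ → ℂ := fun n => ((wm ((d:ℤ) - 1 - n) : ℝ) : ℂ) with hxdef
  set p : ℂ[X] := ∑ j ∈ Finset.range (d+1), Polynomial.monomial j ((f.coeff (d - j) : ℤ) : ℂ)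
    with hpdef
  have hpdeg : p.natDegree < d + 1 := by
    apply Nat.lt_succ_of_le
    apply natDegree_sum_le_of_forall_le
    intro j hj
    exact (natDegree_monomial_le _).trans (by
      have := Finset.mem_range.mp hj; omega)
  have hcoeff : ∀ i, i ≤ d → p.coeff i = ((f.coeff (d - i) : ℤ) : ℂ) := by
    intro i hi
    rw [hpdef, Polynomial.finset_sum_coeff]
    simp only [Polynomial.coeff_monomial]
    rw [Finset.sum_ite_eq' (Finset.range (d+1)) i]
    rw [if_pos (Finset.mem_range.mpr (by omega))]
  have hp0 : p ≠ 0 := by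
    intro h
    have h1 := hcoeff d le_rfl
    rw [h] at h1
    simp only [Polynomial.coeff_zero, Nat.sub_self] at h1
    exact h0 (by exact_mod_cast h1.symm)
  have hx : Tendsto x atTop (nhds 0) := by
    have h1 : Tendsto (fun n : ℕ => (d:ℤ) - 1 - n) atTop atBot := by
      rw [tendsto_atBot]
      intro b
      rw [eventually_atTop]
      exact ⟨((d:ℤ) - 1 - b).toNat, fun n hn => by omega⟩
    have h2 : Tendsto (fun n : ℕ => wm ((d:ℤ) - 1 - n)) atTop (nhds 0) := hwm.2.2.comp h1
    have h3 := (Complex.continuous_ofReal.tendsto 0).comp h2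
    exact h3
  have hann : (Polynomial.aeval S p) x = fun _ => 0 := by
    funext n
    rw [aeval_S_apply p hpdeg x n]
    have h1 : ∑ j ∈ Finset.range (d+1), p.coeff j * x (n + j)
        = ∑ j ∈ Finset.range (d+1), ((f.coeff j : ℤ) : ℂ) * ((wm ((j:ℤ) - 1 - n) : ℝ) : ℂ) := by
      rw [← Finset.sum_range_reflect
        (fun j => ((f.coeff j : ℤ) : ℂ) * ((wm ((j:ℤ) - 1 - n) : ℝ) : ℂ)) (d+1)]
      apply Finset.sum_congr rfl
      intro j hj
      have hjd : j ≤ d := by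
        have := Finset.mem_range.mp hj; omega
      have e1 : d + 1 - 1 - j = d - j := by omega
      have e2 : x (n + j) = ((wm (((d - j : ℕ) : ℤ) - 1 - n) : ℝ) : ℂ) := by
        show ((wm ((d:ℤ) - 1 - ((n + j : ℕ) : ℤ)) : ℝ) : ℂ) = _
        congr 2
        omega
      rw [hcoeff j hjd, e1, e2]
    rw [h1]
    have h2 : ∑ j ∈ Finset.range (d+1), ((f.coeff j : ℤ) : ℂ) * ((wm ((j:ℤ) - 1 - n) : ℝ) : ℂ)
        = ((fsR f wm (-1 - n) : ℝ) : ℂ) := by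
      rw [fsR]
      push_cast
      apply Finset.sum_congr rfl
      intro j _
      have : ((j:ℤ) - 1 - n) = (-1 - n + j) := by ring
      rw [this]
    rw [h2]
    have h3 : fsR f wm (-1 - (n:ℤ)) = 0 := by
      rw [hwm.2.1]
      simp only [vDelta, if_neg (by omega : ¬(-1 - (n:ℤ) = 0))]
    rw [h3]
    norm_num
  have hxd : ExpDecay x := by
    apply decay_of_ann p.natDegree p rfl hp0 x hx
    rw [hann]
    exact expDecay_zero
  obtain ⟨C, r, hC, hr0, hr1, hb⟩ := hxd
  refine ⟨C, r, hC, hr0, hr1, fun n => ?_⟩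
  have := hb n
  rwa [hxdef, Complex.abs_ofReal] at this

lemma decay_wp (f : Polynomial ℤ) (h0 : f.coeff 0 ≠ 0) (wp : ℤ → ℝ) (hwp : IsWplus f wp) :
    ∃ C r : ℝ, 0 ≤ C ∧ 0 < r ∧ r < 1 ∧
      ∀ n : ℕ, |wp (1 + n)| ≤ C * r ^ n := by
  set d := f.natDegree with hd
  set x : ℕ → ℂ := fun n => ((wp (1 + n) : ℝ) : ℂ) with hxdef
  set p : ℂ[X] := f.map (Int.castRingHom ℂ) with hpdef
  have hpdeg : p.natDegree < d + 1 :=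
    Nat.lt_succ_of_le Polynomial.natDegree_map_le
  have hf0 : f ≠ 0 := by
    intro h; apply h0; rw [h]; simp
  have hp0 : p ≠ 0 := by
    rw [hpdef, Polynomial.map_ne_zero_iff (by exact_mod_cast Int.cast_injective)]
    exact hf0
  have hx : Tendsto x atTop (nhds 0) := by
    have h1 : Tendsto (fun n : ℕ => 1 + (n:ℤ)) atTop atTop := by
      rw [tendsto_atTop]
      intro b
      rw [eventually_atTop]
      exact ⟨(b - 1).toNat, fun n hn => by omega⟩
    have h2 : Tendsto (fun n : ℕ => wp (1 + n)) atTop (nhds 0) := hwp.2.2.comp h1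
    have h3 := (Complex.continuous_ofReal.tendsto 0).comp h2
    exact h3
  have hann : (Polynomial.aeval S p) x = fun _ => 0 := by
    funext n
    rw [aeval_S_apply p hpdeg x n]
    have h2 : ∑ j ∈ Finset.range (d+1), p.coeff j * x (n + j)
        = ((fsR f wp (1 + n) : ℝ) : ℂ) := by
      rw [fsR]
      push_cast
      apply Finset.sum_congr rfl
      intro j _
      rw [hpdef, Polynomial.coeff_map]
      have e2 : x (n + j) = ((wp (1 + (n:ℤ) + j) : ℝ) : ℂ) := by
        show ((wp ((1:ℤ) + ((n + j : ℕ) : ℤ)) : ℝ) : ℂ) = _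
        congr 2
        push_cast
        ring
      rw [e2]
      simp
    rw [h2]
    have h3 : fsR f wp (1 + (n:ℤ)) = 0 := by
      rw [hwp.2.1]
      simp only [vDelta, if_neg (by omega : ¬(1 + (n:ℤ) = 0))]
    rw [h3]
    norm_num
  have hxd : ExpDecay x := by
    apply decay_of_ann p.natDegree p rfl hp0 x hx
    rw [hann]
    exact expDecay_zero
  obtain ⟨C, r, hC, hr0, hr1, hb⟩ := hxd
  refine ⟨C, r, hC, hr0, hr1, fun n => ?_⟩
  have := hb n
  rwa [hxdef, Complex.abs_ofReal] at this

lemma summable_of_tail_geom (g : ℕ → ℝ) (M C r : ℝ) (hM : 0 ≤ M) (hr0 : 0 < r) (hr1 : r < 1)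
    (t : ℕ) (h1 : ∀ m, |g m| ≤ M) (h2 : ∀ m, t ≤ m → |g m| ≤ C * r ^ m) :
    Summable (fun m => |g m|) := by
  have hrt : (0:ℝ) < r ^ t := pow_pos hr0 t
  set D : ℝ := max C (M / r ^ t) with hD
  have hsum : Summable (fun m : ℕ => D * r ^ m) :=
    (summable_geometric_of_lt_one hr0.le hr1).mul_left _
  apply Summable.of_nonneg_of_le (fun m => abs_nonneg _) _ hsum
  intro m
  rcases le_or_gt t m with h | h
  · exact (h2 m h).trans (mul_le_mul_of_nonneg_right (le_max_left _ _) (pow_nonneg hr0.le m))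
  · calc |g m| ≤ M := h1 m
    _ = (M / r ^ t) * r ^ t := by field_simp
    _ ≤ (M / r ^ t) * r ^ m := by
        apply mul_le_mul_of_nonneg_left _ (div_nonneg hM hrt.le)
        exact pow_le_pow_of_le_one hr0.le hr1.le h.le
    _ ≤ D * r ^ m := mul_le_mul_of_nonneg_right (le_max_right _ _) (pow_nonneg hr0.le m)

/-- The kernel `G k n`. -/
def Gk (wp wm : ℤ → ℝ) (k n : ℤ) : ℝ := if 0 ≤ n then wm (k - n) else wp (k - n)

lemma summable_absG (wp wm : ℤ → ℝ) (d : ℕ) (Mm Mp C r : ℝ)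
    (hMm : ∀ n, |wm n| ≤ Mm) (hMp : ∀ n, |wp n| ≤ Mp)
    (hC : 0 ≤ C) (hr0 : 0 < r) (hr1 : r < 1)
    (hdm : ∀ n : ℕ, |wm ((d : ℤ) - 1 - n)| ≤ C * r ^ n)
    (hdp : ∀ n : ℕ, |wp (1 + n)| ≤ C * r ^ n) (k : ℤ) :
    Summable (fun n : ℤ => |Gk wp wm k n|) := by
  have hMm0 : 0 ≤ Mm := le_trans (abs_nonneg _) (hMm 0)
  have hMp0 : 0 ≤ Mp := le_trans (abs_nonneg _) (hMp 0)
  have hrne : r ≠ 0 := hr0.ne'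
  apply Summable.of_nat_of_neg
  · -- positive side : |wm (k - m)|
    have hcongr : ∀ m : ℕ, |Gk wp wm k m| = |wm (k - m)| := by
      intro m
      rw [Gk, if_pos (by exact_mod_cast Int.ofNat_nonneg m)]
    apply Summable.congr _ (fun m => (hcongr m).symm)
    apply summable_of_tail_geom (fun m => wm (k - m)) Mm (C * r ^ ((d:ℤ) - 1 - k)) r hMm0 hr0 hr1
      ((k - d + 1).toNat) (fun m => hMm _)
    intro m hm
    have hm' : k - (d:ℤ) + 1 ≤ m := le_trans (Int.self_le_toNat _) (by exact_mod_cast hm)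
    set n : ℕ := ((d:ℤ) - 1 - k + m).toNat with hn
    have hn' : (n : ℤ) = (d:ℤ) - 1 - k + m := Int.toNat_of_nonneg (by omega)
    have e1 : k - m = (d:ℤ) - 1 - n := by omega
    have e2 : C * r ^ n = C * r ^ ((d:ℤ) - 1 - k) * r ^ m := by
      have : (r : ℝ) ^ (n:ℕ) = r ^ ((n : ℤ)) := (zpow_natCast r n).symm
      rw [mul_assoc, this, hn']
      congr 1
      rw [show ((d:ℤ) - 1 - k + m) = ((d:ℤ) - 1 - k) + (m:ℤ) by ring, zpow_add₀ hrne,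
        zpow_natCast]
    rw [e1, ← e2]
    exact hdm n
  · -- negative side : |Gk k (-m)|
    apply summable_of_tail_geom (fun m : ℕ => Gk wp wm k (-m)) (max Mm Mp)
      (C * r ^ (k - 1)) r (le_max_of_le_left hMm0) hr0 hr1 ((1 - k).toNat + 1)
    · intro m
      rw [Gk]
      rcases le_or_gt 0 (-(m:ℤ)) with h | h
      · rw [if_pos h]; exact le_max_of_le_left (hMm _)
      · rw [if_neg (not_le.mpr h)]; exact le_max_of_le_right (hMp _)
    · intro m hm
      have hm1 : 1 ≤ m := le_trans (Nat.le_add_left 1 _) hm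
      have hm2 : 1 - k ≤ ((m:ℤ) - 1) := by
        have := Int.self_le_toNat (1 - k)
        omega
      have hneg : ¬ (0 ≤ -(m:ℤ)) := by omega
      rw [Gk, if_neg hneg]
      set n : ℕ := (k - 1 + m).toNat with hn
      have hn' : (n : ℤ) = k - 1 + m := Int.toNat_of_nonneg (by omega)
      have e1 : k - (-(m:ℤ)) = 1 + n := by omega
      have e2 : C * r ^ n = C * r ^ (k - 1) * r ^ m := by
        have : (r : ℝ) ^ (n:ℕ) = r ^ ((n : ℤ)) := (zpow_natCast r n).symm
        rw [mul_assoc, this, hn']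
        congr 1
        rw [show (k - 1 + m) = (k - 1) + (m:ℤ) by ring, zpow_add₀ hrne, zpow_natCast]
      rw [e1, ← e2]
      exact hdp n

lemma summable_bdd_mul {a g : ℤ → ℝ} (B : ℝ) (ha : ∀ n, |a n| ≤ B)
    (hg : Summable fun n => |g n|) : Summable (fun n => a n * g n) := by
  have hB : 0 ≤ B := le_trans (abs_nonneg _) (ha 0)
  apply Summable.of_abs
  apply Summable.of_nonneg_of_le (fun n => abs_nonneg _) _ (hg.mul_left B)
  intro n
  rw [abs_mul]
  exact mul_le_mul_of_nonneg_right (ha n) (abs_nonneg _)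

lemma fsR_xiStar (f : Polynomial ℤ) (wp wm : ℤ → ℝ)
    (hwp : IsWplus f wp) (hwm : IsWminus f wm)
    (hG : ∀ k, Summable (fun n : ℤ => |Gk wp wm k n|))
    (v : ℤ → ℤ) (B : ℤ) (hv : ∀ n, |v n| ≤ B) (n : ℤ) :
    fsR f (xiStar wp wm v) n = (v n : ℝ) := by
  have hvB : ∀ m : ℤ, |(v m : ℝ)| ≤ (B : ℝ) := fun m => by exact_mod_cast hv m
  have hxi : ∀ k, xiStar wp wm v k = ∑' m : ℤ, (v m : ℝ) * Gk wp wm k m := fun k => rfl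
  rw [fsR]
  have h1 : ∀ j ∈ Finset.range (f.natDegree + 1),
      (f.coeff j : ℝ) * xiStar wp wm v (n + j)
      = ∑' m : ℤ, (f.coeff j : ℝ) * ((v m : ℝ) * Gk wp wm (n + j) m) := by
    intro j _
    rw [hxi, tsum_mul_left]
  rw [Finset.sum_congr rfl h1]
  have hswap := Summable.tsum_finsetSum (f := fun (j : ℕ) (m : ℤ) => (f.coeff j : ℝ) * ((v m : ℝ) * Gk wp wm (n + j) m))
    (s := Finset.range (f.natDegree + 1))
    (fun j _ => ((summable_bdd_mul (B:ℝ) hvB (hG (n+j))).mul_left _))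
  rw [← hswap]
  have h2 : ∀ m : ℤ, ∑ j ∈ Finset.range (f.natDegree + 1),
      (f.coeff j : ℝ) * ((v m : ℝ) * Gk wp wm (n + j) m)
      = (v m : ℝ) * vDelta (n - m) := by
    intro m
    have h3 : ∑ j ∈ Finset.range (f.natDegree+1), (f.coeff j:ℝ) * Gk wp wm (n+j) m
        = vDelta (n - m) := by
      by_cases h : 0 ≤ m
      · have he : ∀ j ∈ Finset.range (f.natDegree+1), (f.coeff j:ℝ) * Gk wp wm (n+j) m
            = (f.coeff j : ℝ) * wm (n - m + j) := by
          intro j _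
          rw [Gk, if_pos h]
          congr 2
          ring
        rw [Finset.sum_congr rfl he]
        have hfsr := congrFun hwm.2.1 (n - m)
        rw [fsR] at hfsr
        rw [hfsr]
      · have he : ∀ j ∈ Finset.range (f.natDegree+1), (f.coeff j:ℝ) * Gk wp wm (n+j) m
            = (f.coeff j : ℝ) * wp (n - m + j) := by
          intro j _
          rw [Gk, if_neg h]
          congr 2
          ring
        rw [Finset.sum_congr rfl he]
        have hfsr := congrFun hwp.2.1 (n - m)
        rw [fsR] at hfsr
        rw [hfsr]
    calc ∑ j ∈ Finset.range (f.natDegree + 1),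
        (f.coeff j : ℝ) * ((v m : ℝ) * Gk wp wm (n + j) m)
        = (v m : ℝ) * ∑ j ∈ Finset.range (f.natDegree+1), (f.coeff j:ℝ) * Gk wp wm (n+j) m := by
          rw [Finset.mul_sum]
          exact Finset.sum_congr rfl (fun j _ => by ring)
    _ = (v m : ℝ) * vDelta (n - m) := by rw [h3]
  rw [tsum_congr h2]
  rw [tsum_eq_single n (fun m hm => by
    rw [vDelta]
    simp only [if_neg (show ¬(n - m = 0) by omega), mul_zero])]
  rw [vDelta]
  simp

lemma bdd_xiStar (f : Polynomial ℤ) (wp wm : ℤ → ℝ)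
    (hwp : IsWplus f wp) (hwm : IsWminus f wm)
    (hG : ∀ k, Summable (fun n : ℤ => |Gk wp wm k n|))
    (Mm Mp : ℝ) (hMm : ∀ n, |wm n| ≤ Mm) (hMp : ∀ n, |wp n| ≤ Mp)
    (v : ℤ → ℤ) (w : ℤ → ℝ) (Bw : ℝ) (hw : ∀ n, |w n| ≤ Bw)
    (hfw : ∀ m, fsR f w m = (v m : ℝ)) : Bdd (xiStar wp wm v) := by
  set d := f.natDegree with hd
  set MG : ℝ := max Mm Mp with hMG
  set K : ℝ := (∑ j ∈ Finset.range (d+1), |(f.coeff j : ℝ)|) * MG with hK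
  have hBw0 : 0 ≤ Bw := le_trans (abs_nonneg _) (hw 0)
  have hMG0 : 0 ≤ MG := le_trans (le_trans (abs_nonneg _) (hMm 0)) (le_max_left _ _)
  have hGb : ∀ k a : ℤ, |Gk wp wm k a| ≤ MG := by
    intro k a
    rw [Gk]
    rcases le_or_gt 0 a with h | h
    · rw [if_pos h]; exact le_max_of_le_left (hMm _)
    · rw [if_neg (not_le.mpr h)]; exact le_max_of_le_right (hMp _)
  have hK0 : 0 ≤ K :=
    mul_nonneg (Finset.sum_nonneg (fun j _ => abs_nonneg _)) hMG0
  refine ⟨((d:ℝ) + 1) * (Bw * K), fun k => ?_⟩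
  -- the auxiliary kernel sums
  set h : ℤ → ℝ := fun m => ∑ j ∈ Finset.range (d+1), (f.coeff j : ℝ) * Gk wp wm k (m - j)
    with hh
  have hGshift : ∀ j : ℕ, Summable (fun m : ℤ => |Gk wp wm k (m - j)|) := by
    intro j
    exact (hG k).comp_injective (i := fun m : ℤ => m - (j:ℤ)) sub_left_injective
  -- chain of identities
  have step1 : xiStar wp wm v k
      = ∑' m : ℤ, ∑ j ∈ Finset.range (d+1), ((f.coeff j : ℝ) * w (m + j)) * Gk wp wm k m := by
    apply tsum_congr
    intro m
    rw [← Finset.sum_mul, ← hfw m]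
    rfl
  have hsum1 : ∀ j ∈ Finset.range (d+1),
      Summable (fun m : ℤ => ((f.coeff j : ℝ) * w (m + j)) * Gk wp wm k m) := by
    intro j _
    apply summable_bdd_mul (|(f.coeff j : ℝ)| * Bw) _ (hG k)
    intro m
    rw [abs_mul]
    exact mul_le_mul_of_nonneg_left (hw _) (abs_nonneg _)
  have step2 : ∑' m : ℤ, ∑ j ∈ Finset.range (d+1), ((f.coeff j : ℝ) * w (m + j)) * Gk wp wm k m
      = ∑ j ∈ Finset.range (d+1), ∑' m : ℤ, ((f.coeff j : ℝ) * w (m + j)) * Gk wp wm k m :=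
    Summable.tsum_finsetSum hsum1
  have step3 : ∀ j : ℕ, ∑' m : ℤ, ((f.coeff j : ℝ) * w (m + j)) * Gk wp wm k m
      = ∑' m : ℤ, (f.coeff j : ℝ) * (w m * Gk wp wm k (m - j)) := by
    intro j
    have e1 : ∀ m : ℤ, ((f.coeff j : ℝ) * w (m + j)) * Gk wp wm k m
        = (fun a : ℤ => (f.coeff j : ℝ) * (w a * Gk wp wm k (a - j))) ((Equiv.addRight (j:ℤ)) m) := by
      intro m
      simp only [Equiv.coe_addRight]
      rw [add_sub_cancel_right]
      ring
    rw [tsum_congr e1]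
    exact Equiv.tsum_eq (Equiv.addRight (j:ℤ))
      (fun a => (f.coeff j : ℝ) * (w a * Gk wp wm k (a - j)))
  have hsum2 : ∀ j ∈ Finset.range (d+1),
      Summable (fun m : ℤ => (f.coeff j : ℝ) * (w m * Gk wp wm k (m - j))) := by
    intro j _
    exact (summable_bdd_mul Bw hw (hGshift j)).mul_left _
  have step4 : ∑ j ∈ Finset.range (d+1), ∑' m : ℤ, (f.coeff j : ℝ) * (w m * Gk wp wm k (m - j))
      = ∑' m : ℤ, ∑ j ∈ Finset.range (d+1), (f.coeff j : ℝ) * (w m * Gk wp wm k (m - j)) :=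
    (Summable.tsum_finsetSum hsum2).symm
  have step5 : ∀ m : ℤ, ∑ j ∈ Finset.range (d+1), (f.coeff j : ℝ) * (w m * Gk wp wm k (m - j))
      = w m * h m := by
    intro m
    rw [hh, Finset.mul_sum]
    exact Finset.sum_congr rfl (fun j _ => by ring)
  -- h m = vDelta (k - m) outside [0, d-1]
  have houts : ∀ m : ℤ, (m < 0 ∨ (d:ℤ) ≤ m) → h m = vDelta (k - m) := by
    intro m hm
    rcases hm with hm | hm
    · have he : ∀ j ∈ Finset.range (d+1), (f.coeff j : ℝ) * Gk wp wm k (m - j)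
          = (f.coeff j : ℝ) * wp (k - m + j) := by
        intro j _
        rw [Gk, if_neg (by omega)]
        congr 2
        ring
      show (∑ j ∈ Finset.range (d+1), (f.coeff j : ℝ) * Gk wp wm k (m - j)) = vDelta (k - m)
      rw [Finset.sum_congr rfl he]
      have hfsr := congrFun hwp.2.1 (k - m)
      rw [fsR] at hfsr
      rw [hfsr]
    · have he : ∀ j ∈ Finset.range (d+1), (f.coeff j : ℝ) * Gk wp wm k (m - j)
          = (f.coeff j : ℝ) * wm (k - m + j) := by
        intro j hj
        have hjd : (j:ℤ) ≤ d := by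
          have := Finset.mem_range.mp hj; omega
        rw [Gk, if_pos (by omega)]
        congr 2
        ring
      show (∑ j ∈ Finset.range (d+1), (f.coeff j : ℝ) * Gk wp wm k (m - j)) = vDelta (k - m)
      rw [Finset.sum_congr rfl he]
      have hfsr := congrFun hwm.2.1 (k - m)
      rw [fsR] at hfsr
      rw [hfsr]
  have hhb : ∀ m : ℤ, |h m| ≤ K := by
    intro m
    rw [hh]
    calc |∑ j ∈ Finset.range (d+1), (f.coeff j : ℝ) * Gk wp wm k (m - j)|
        ≤ ∑ j ∈ Finset.range (d+1), |(f.coeff j : ℝ) * Gk wp wm k (m - j)| :=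
          Finset.abs_sum_le_sum_abs _ _
    _ ≤ ∑ j ∈ Finset.range (d+1), |(f.coeff j : ℝ)| * MG := by
        apply Finset.sum_le_sum
        intro j _
        rw [abs_mul]
        exact mul_le_mul_of_nonneg_left (hGb _ _) (abs_nonneg _)
    _ = K := by rw [hK, Finset.sum_mul]
  -- final bound
  set s : Finset ℤ := Finset.Icc (0:ℤ) ((d:ℤ)-1) ∪ {k} with hs
  have hvanish : ∀ m ∉ s, w m * h m = 0 := by
    intro m hm
    rw [hs, Finset.mem_union, Finset.mem_Icc, Finset.mem_singleton] at hm
    push_neg at hm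
    rw [houts m (by omega), vDelta, if_neg (by
      have := hm.2; omega), mul_zero]
  have hfinal : xiStar wp wm v k = ∑ m ∈ s, w m * h m := by
    rw [step1, step2, Finset.sum_congr rfl (fun j _ => step3 j), step4,
      tsum_congr step5, tsum_eq_sum hvanish]
  rw [hfinal]
  have hcard : (s.card : ℝ) ≤ (d:ℝ) + 1 := by
    have h1 : s.card ≤ (Finset.Icc (0:ℤ) ((d:ℤ)-1)).card + 1 := by
      apply le_trans (Finset.card_union_le _ _)
      simp
    have h2 : (Finset.Icc (0:ℤ) ((d:ℤ)-1)).card = d := by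
      rw [Int.card_Icc]
      omega
    rw [h2] at h1
    exact_mod_cast h1
  calc |∑ m ∈ s, w m * h m| ≤ ∑ m ∈ s, |w m * h m| := Finset.abs_sum_le_sum_abs _ _
  _ ≤ ∑ m ∈ s, Bw * K := by
      apply Finset.sum_le_sum
      intro m _
      rw [abs_mul]
      exact mul_le_mul (hw m) (hhb m) (abs_nonneg _) hBw0
  _ = (s.card : ℝ) * (Bw * K) := by rw [Finset.sum_const, nsmul_eq_mul]
  _ ≤ ((d:ℝ) + 1) * (Bw * K) :=
      mul_le_mul_of_nonneg_right hcard (mul_nonneg hBw0 hK0)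

end XiAux

/-- `V_f = {v ∈ ℓ^∞(ℤ,ℤ) : ξ̄*(v) ∈ ℓ^∞(ℤ,ℝ)}` and `ξ̄*(V_f) ⊆ W_f`. -/
theorem Vf_eq_bounded_xiStar (f : Polynomial ℤ) (hm : 1 ≤ f.natDegree)
    (hlead : 0 < f.leadingCoeff) (h0 : f.coeff 0 ≠ 0)
    (hirr : Irreducible (Polynomial.toLaurent f)) (hnc : Noncyclotomic f)
    (wp wm : ℤ → ℝ) (hwp : IsWplus f wp) (hwm : IsWminus f wm) :
    (∀ v : ℤ → ℤ, BddZ v → (InVf f v ↔ Bdd (xiStar wp wm v))) ∧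
    (∀ v : ℤ → ℤ, BddZ v → InVf f v → InWf f (xiStar wp wm v)) := by
  obtain ⟨Mp, hMp⟩ := hwp.1
  obtain ⟨Mm, hMm⟩ := hwm.1
  obtain ⟨Cm, rm, hCm, hrm0, hrm1, hbm⟩ := XiAux.decay_wm f h0 wm hwm
  obtain ⟨Cp, rp, hCp, hrp0, hrp1, hbp⟩ := XiAux.decay_wp f h0 wp hwp
  set C : ℝ := max Cm Cp with hCdef
  set r : ℝ := max rm rp with hrdef
  have hr0 : 0 < r := lt_max_of_lt_left hrm0
  have hr1 : r < 1 := max_lt hrm1 hrp1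
  have hC : 0 ≤ C := le_max_of_le_left hCm
  have hdm : ∀ n : ℕ, |wm ((f.natDegree : ℤ) - 1 - n)| ≤ C * r ^ n := fun n =>
    (hbm n).trans (mul_le_mul (le_max_left _ _)
      (pow_le_pow_left₀ hrm0.le (le_max_left _ _) n) (pow_nonneg hrm0.le n) hC)
  have hdp : ∀ n : ℕ, |wp (1 + (n : ℤ))| ≤ C * r ^ n := fun n =>
    (hbp n).trans (mul_le_mul (le_max_right _ _)
      (pow_le_pow_left₀ hrp0.le (le_max_right _ _) n) (pow_nonneg hrp0.le n) hC)
  have hG : ∀ k, Summable (fun n : ℤ => |XiAux.Gk wp wm k n|) :=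
    XiAux.summable_absG wp wm f.natDegree Mm Mp C r hMm hMp hC hr0 hr1 hdm hdp
  have hA : ∀ (v : ℤ → ℤ), BddZ v → ∀ n, fsR f (xiStar wp wm v) n = (v n : ℝ) := by
    rintro v ⟨B, hv⟩ n
    exact XiAux.fsR_xiStar f wp wm hwp hwm hG v B hv n
  have hBdd : ∀ (v : ℤ → ℤ), InVf f v → Bdd (xiStar wp wm v) := by
    rintro v ⟨w, ⟨Bw, hw⟩, hfw⟩
    exact XiAux.bdd_xiStar f wp wm hwp hwm hG Mm Mp hMm hMp v w Bw hw hfw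
  constructor
  · intro v hv
    constructor
    · exact fun h => hBdd v h
    · intro hb
      exact ⟨xiStar wp wm v, hb, fun n => hA v hv n⟩
  · intro v hv hVf
    exact ⟨hBdd v hVf, fun n => ⟨v n, hA v hv n⟩⟩

end
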